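/- For any Boolean function f whose protocol partition number exceeds 3, C₀ᴾ(f) ≤ (3/2)·C₁ᴾ(f). -/

import Mathlib

/-- A two-party protocol tree: internal nodes are owned by Alice (`nodeA`,
labeled by a function of her input) or Bob (`nodeB`), leaves carry output bits. -/
inductive PTree (X Y : Type) : Type
  | leaf : Bool → PTree X Y
  | nodeA : (X → Bool) → PTree X Y → PTree X Y → PTree X Y
  | nodeB : (Y → Bool) → PTree X Y → PTree X Y → PTree X Y

namespace PTree
variable {X Y : Type}

/-- The output of the protocol on input pair `(x, y)`. -/
def eval : PTree X Y → X → Y → Bool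
  | leaf b, _, _ => b
  | nodeA g l r, x, y => if g x then eval r x y else eval l x y
  | nodeB g l r, x, y => if g y then eval r x y else eval l x y

/-- Depth of the protocol tree (worst-case number of bits communicated). -/
def depth : PTree X Y → ℕ
  | leaf _ => 0
  | nodeA _ l r => max (depth l) (depth r) + 1
  | nodeB _ l r => max (depth l) (depth r) + 1

/-- Total number of leaves. -/
def leaves : PTree X Y → ℕ
  | leaf _ => 1
  | nodeA _ l r => leaves l + leaves r
  | nodeB _ l r => leaves l + leaves r

/-- Number of leaves labeled `c`. -/
def leavesLabeled (c : Bool) : PTree X Y → ℕ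
  | leaf b => if b = c then 1 else 0
  | nodeA _ l r => leavesLabeled c l + leavesLabeled c r
  | nodeB _ l r => leavesLabeled c l + leavesLabeled c r

/-- The protocol tree computes `f`. -/
def Computes (T : PTree X Y) (f : X → Y → Bool) : Prop :=
  ∀ x y, T.eval x y = f x y

end PTree

/-- Deterministic communication complexity: minimal depth of a protocol tree computing `f`. -/
noncomputable def Dcc {X Y : Type} (f : X → Y → Bool) : ℕ :=
  sInf {d | ∃ T : PTree X Y, T.Computes f ∧ T.depth = d}

/-- Protocol partition number: minimal number of leaves of a protocol tree computing `f`. -/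
noncomputable def CP {X Y : Type} (f : X → Y → Bool) : ℕ :=
  sInf {c | ∃ T : PTree X Y, T.Computes f ∧ T.leaves = c}

/-- Minimal number of `1`-leaves of a protocol tree computing `f`. -/
noncomputable def C1P {X Y : Type} (f : X → Y → Bool) : ℕ :=
  sInf {c | ∃ T : PTree X Y, T.Computes f ∧ T.leavesLabeled true = c}

/-- Minimal number of `0`-leaves of a protocol tree computing `f`. -/
noncomputable def C0P {X Y : Type} (f : X → Y → Bool) : ℕ :=
  sInf {c | ∃ T : PTree X Y, T.Computes f ∧ T.leavesLabeled false = c}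


namespace PTree
variable {X Y : Type}

lemma eval_of_L1_zero (T : PTree X Y) (h : T.leavesLabeled true = 0) :
    ∀ x y, T.eval x y = false := by
  induction T with
  | leaf b => cases b <;> simp_all [leavesLabeled, eval]
  | nodeA g l r ihl ihr =>
      simp only [leavesLabeled] at h
      intro x y
      simp only [eval]
      cases g x <;> simp [ihl (by omega) x y, ihr (by omega) x y]
  | nodeB g l r ihl ihr =>
      simp only [leavesLabeled] at h
      intro x y
      simp only [eval]
      cases g y <;> simp [ihl (by omega) x y, ihr (by omega) x y]

lemma rect_of_L1_one (T : PTree X Y) (h : T.leavesLabeled true = 1) :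
    ∃ (A : X → Bool) (B : Y → Bool), ∀ x y, T.eval x y = (A x && B y) := by
  induction T with
  | leaf b =>
      cases b
      · simp [leavesLabeled] at h
      · exact ⟨fun _ => true, fun _ => true, by simp [eval]⟩
  | nodeA g l r ihl ihr =>
      simp only [leavesLabeled] at h
      by_cases hl : l.leavesLabeled true = 0
      · obtain ⟨A, B, hAB⟩ := ihr (by omega)
        refine ⟨fun x => g x && A x, B, fun x y => ?_⟩
        simp only [eval]
        cases hg : g x
        · simp [eval_of_L1_zero l hl x y]
        · simp [hAB]
      · obtain ⟨A, B, hAB⟩ := ihl (by omega)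
        refine ⟨fun x => !(g x) && A x, B, fun x y => ?_⟩
        simp only [eval]
        cases hg : g x
        · simp [hAB]
        · simp [eval_of_L1_zero r (by omega) x y]
  | nodeB g l r ihl ihr =>
      simp only [leavesLabeled] at h
      by_cases hl : l.leavesLabeled true = 0
      · obtain ⟨A, B, hAB⟩ := ihr (by omega)
        refine ⟨A, fun y => g y && B y, fun x y => ?_⟩
        simp only [eval]
        cases hg : g y
        · simp [eval_of_L1_zero l hl x y]
        · simp [hAB]
      · obtain ⟨A, B, hAB⟩ := ihl (by omega)
        refine ⟨A, fun y => !(g y) && B y, fun x y => ?_⟩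
        simp only [eval]
        cases hg : g y
        · simp [hAB]
        · simp [eval_of_L1_zero r (by omega) x y]

lemma main_aux (S : PTree X Y)
    (hmain : ∀ (p : X → Bool) (q : Y → Bool), 2 ≤ S.leavesLabeled true →
      ∃ T' : PTree X Y,
        (∀ x y, T'.eval x y = (p x && (q y && S.eval x y))) ∧
        2 * T'.leavesLabeled false ≤ 3 * S.leavesLabeled true)
    (hb : 1 ≤ S.leavesLabeled true) (p : X → Bool) (q : Y → Bool) :
    ∃ T' : PTree X Y,
      (∀ x y, T'.eval x y = (p x && (q y && S.eval x y))) ∧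
      2 * T'.leavesLabeled false ≤ 3 * S.leavesLabeled true + 1 := by
  by_cases h1 : S.leavesLabeled true = 1
  · obtain ⟨A, B, hAB⟩ := rect_of_L1_one S h1
    refine ⟨nodeA (fun x => p x && A x) (leaf false)
        (nodeB (fun y => q y && B y) (leaf false) (leaf true)), fun x y => ?_, ?_⟩
    · simp only [eval, hAB]
      by_cases hp : p x = true <;> by_cases hq : q y = true <;> by_cases hA : A x = true <;> by_cases hB : B y = true <;> simp [hp, hq, hA, hB]
    · simp [leavesLabeled]
      omega
  · obtain ⟨T', hT', hc⟩ := hmain p q (by omega)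
    exact ⟨T', hT', by omega⟩

lemma main_lemma (T : PTree X Y) : ∀ (p : X → Bool) (q : Y → Bool),
    2 ≤ T.leavesLabeled true →
    ∃ T' : PTree X Y,
      (∀ x y, T'.eval x y = (p x && (q y && T.eval x y))) ∧
      2 * T'.leavesLabeled false ≤ 3 * T.leavesLabeled true := by
  induction T with
  | leaf b => intro p q h; cases b <;> simp [leavesLabeled] at h
  | nodeA g l r ihl ihr =>
    intro p q h
    simp only [leavesLabeled] at h ⊢
    by_cases ha0 : l.leavesLabeled true = 0
    · obtain ⟨T', hT', hc⟩ := ihr (fun x => p x && g x) q (by omega)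
      refine ⟨T', fun x y => ?_, by omega⟩
      rw [hT']
      simp only [eval]
      cases hg : g x
      · simp [eval_of_L1_zero l ha0 x y]
      · simp
    · by_cases hb0 : r.leavesLabeled true = 0
      · obtain ⟨T', hT', hc⟩ := ihl (fun x => p x && !(g x)) q (by omega)
        refine ⟨T', fun x y => ?_, by omega⟩
        rw [hT']
        simp only [eval]
        cases hg : g x
        · simp
        · simp [eval_of_L1_zero r hb0 x y]
      · by_cases ha1 : l.leavesLabeled true = 1
        · -- left child has one 1-leaf: its 1-set is a rectangle
          obtain ⟨A, B, hAB⟩ := rect_of_L1_one l ha1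
          obtain ⟨T', hT', hc⟩ := main_aux r ihr (by omega) (fun x => p x && g x) q
          refine ⟨nodeA (fun x => p x && (!(g x) && A x)) T'
              (nodeB (fun y => q y && B y) (leaf false) (leaf true)), fun x y => ?_, ?_⟩
          · simp only [eval, hT', hAB]
            by_cases hp : p x = true <;> by_cases hg : g x = true <;> by_cases hA : A x = true <;> by_cases hq : q y = true <;> by_cases hB : B y = true <;> simp [hp, hg, hA, hq, hB]
          · simp [leavesLabeled] at hc ⊢
            omega
        · by_cases hb1 : r.leavesLabeled true = 1
          · obtain ⟨A, B, hAB⟩ := rect_of_L1_one r hb1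
            obtain ⟨T', hT', hc⟩ := main_aux l ihl (by omega) (fun x => p x && !(g x)) q
            refine ⟨nodeA (fun x => p x && (g x && A x)) T'
                (nodeB (fun y => q y && B y) (leaf false) (leaf true)), fun x y => ?_, ?_⟩
            · simp only [eval, hT', hAB]
              by_cases hp : p x = true <;> by_cases hg : g x = true <;> by_cases hA : A x = true <;> by_cases hq : q y = true <;> by_cases hB : B y = true <;> simp [hp, hg, hA, hq, hB]
            · simp [leavesLabeled] at hc ⊢
              omega
          · obtain ⟨Tl, hTl, hcl⟩ := ihl p q (by omega)
            obtain ⟨Tr, hTr, hcr⟩ := ihr p q (by omega)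
            refine ⟨nodeA g Tl Tr, fun x y => ?_, ?_⟩
            · simp only [eval]
              cases g x <;> simp [hTl, hTr]
            · simp only [leavesLabeled]
              omega
  | nodeB g l r ihl ihr =>
    intro p q h
    simp only [leavesLabeled] at h ⊢
    by_cases ha0 : l.leavesLabeled true = 0
    · obtain ⟨T', hT', hc⟩ := ihr p (fun y => q y && g y) (by omega)
      refine ⟨T', fun x y => ?_, by omega⟩
      rw [hT']
      simp only [eval]
      cases hg : g y
      · simp [eval_of_L1_zero l ha0 x y]
      · simp
    · by_cases hb0 : r.leavesLabeled true = 0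
      · obtain ⟨T', hT', hc⟩ := ihl p (fun y => q y && !(g y)) (by omega)
        refine ⟨T', fun x y => ?_, by omega⟩
        rw [hT']
        simp only [eval]
        cases hg : g y
        · simp
        · simp [eval_of_L1_zero r hb0 x y]
      · by_cases ha1 : l.leavesLabeled true = 1
        · obtain ⟨A, B, hAB⟩ := rect_of_L1_one l ha1
          obtain ⟨T', hT', hc⟩ := main_aux r ihr (by omega) p (fun y => q y && g y)
          refine ⟨nodeB (fun y => q y && (!(g y) && B y)) T'
              (nodeA (fun x => p x && A x) (leaf false) (leaf true)), fun x y => ?_, ?_⟩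
          · simp only [eval, hT', hAB]
            by_cases hp : p x = true <;> by_cases hg : g y = true <;> by_cases hA : A x = true <;> by_cases hq : q y = true <;> by_cases hB : B y = true <;> simp [hp, hg, hA, hq, hB]
          · simp [leavesLabeled] at hc ⊢
            omega
        · by_cases hb1 : r.leavesLabeled true = 1
          · obtain ⟨A, B, hAB⟩ := rect_of_L1_one r hb1
            obtain ⟨T', hT', hc⟩ := main_aux l ihl (by omega) p (fun y => q y && !(g y))
            refine ⟨nodeB (fun y => q y && (g y && B y)) T'
                (nodeA (fun x => p x && A x) (leaf false) (leaf true)), fun x y => ?_, ?_⟩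
            · simp only [eval, hT', hAB]
              by_cases hp : p x = true <;> by_cases hg : g y = true <;> by_cases hA : A x = true <;> by_cases hq : q y = true <;> by_cases hB : B y = true <;> simp [hp, hg, hA, hq, hB]
            · simp [leavesLabeled] at hc ⊢
              omega
          · obtain ⟨Tl, hTl, hcl⟩ := ihl p q (by omega)
            obtain ⟨Tr, hTr, hcr⟩ := ihr p q (by omega)
            refine ⟨nodeB g Tl Tr, fun x y => ?_, ?_⟩
            · simp only [eval]
              cases g y <;> simp [hTl, hTr]
            · simp only [leavesLabeled]
              omega

end PTree

/-- If `Cᴾ(f) > 3`, then `C₀ᴾ(f) ≤ (3/2) · C₁ᴾ(f)`. -/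
theorem C0P_le_three_halves_C1P {X Y : Type} (f : X → Y → Bool)
    (hf : 3 < CP f) :
    (C0P f : ℚ) ≤ (3 / 2) * (C1P f : ℚ) := by
  have hne : {c | ∃ T : PTree X Y, T.Computes f ∧ T.leaves = c}.Nonempty := by
    by_contra h
    rw [Set.not_nonempty_iff_eq_empty] at h
    rw [CP, h, Nat.sInf_empty] at hf
    omega
  obtain ⟨_, T0, hT0, _⟩ := hne
  have hne1 : {c | ∃ T : PTree X Y, T.Computes f ∧ T.leavesLabeled true = c}.Nonempty :=
    ⟨_, T0, hT0, rfl⟩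
  obtain ⟨T1, hT1, hL1⟩ := Nat.sInf_mem hne1
  have h2 : 2 ≤ T1.leavesLabeled true := by
    by_contra h2
    by_cases h0 : T1.leavesLabeled true = 0
    · have hfalse : ∀ x y, f x y = false := fun x y =>
        (hT1 x y).symm.trans (PTree.eval_of_L1_zero T1 h0 x y)
      have hle : CP f ≤ 1 :=
        Nat.sInf_le ⟨PTree.leaf false, fun x y => by simp [PTree.eval, hfalse], rfl⟩
      omega
    · have h1 : T1.leavesLabeled true = 1 := by omega
      obtain ⟨A, B, hAB⟩ := PTree.rect_of_L1_one T1 h1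
      have hle : CP f ≤ 3 := by
        refine Nat.sInf_le ⟨PTree.nodeA A (PTree.leaf false)
          (PTree.nodeB B (PTree.leaf false) (PTree.leaf true)), fun x y => ?_, ?_⟩
        · rw [← hT1 x y, hAB]
          simp only [PTree.eval]
          cases hA : A x <;> cases hB : B y <;> simp [hA, hB]
        · simp [PTree.leaves]
      omega
  obtain ⟨T', hT', hc⟩ := PTree.main_lemma T1 (fun _ => true) (fun _ => true) h2
  have hcomp : T'.Computes f := fun x y => by rw [hT' x y]; simp [hT1 x y]
  have h0le : C0P f ≤ T'.leavesLabeled false := Nat.sInf_le ⟨T', hcomp, rfl⟩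
  have key : 2 * C0P f ≤ 3 * C1P f := by unfold C1P; omega
  have keyQ : (2 : ℚ) * (C0P f : ℚ) ≤ 3 * (C1P f : ℚ) := by exact_mod_cast key
  linarith
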